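/- For every integer n ≥ 0: ∑_{n_1 ≥ 0} q^{n_1^2 + n_1} [n-1 choose n_1]'_{q^2} = ∑_{r=-∞}^{∞} (-1)^r q^{2r^2+r} [2n choose n - 2r + ((-1)^r - 1)/2]_q, where [a choose b]'_q equals 1 if a < 0 and b = 0, and equals the usual Gaussian binomial coefficient otherwise (which is 0 when b < 0 or b > a). -/

import Mathlib

open Finset

noncomputable section

abbrev F := RatFunc ℚ

/-- The variable `q`, a transcendental element. -/
def q : F := RatFunc.X

/-- `(b;b)_n = ∏_{i=1}^n (1 - b^i)` -/
def pq (b : F) (n : ℕ) : F := ∏ i ∈ Finset.range n, (1 - b ^ (i + 1))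

/-- Gaussian binomial coefficient in base `b`, zero when `k < 0` or `k > a`. -/
def qbin (b : F) (a k : ℤ) : F :=
  if 0 ≤ k ∧ k ≤ a then pq b a.toNat / (pq b k.toNat * pq b (a - k).toNat) else 0

/-- Primed Gaussian binomial: equals 1 when `a < 0` and `k = 0`. -/
def qbin' (b : F) (a k : ℤ) : F :=
  if a < 0 ∧ k = 0 then 1 else qbin b a k


lemma q_ne_zero : q ≠ 0 := RatFunc.X_ne_zero

lemma q_pow_ne_one {k : ℕ} (hk : k ≠ 0) : q ^ k ≠ 1 := by
  intro h
  have : (Polynomial.X : Polynomial ℚ) ^ k = 1 := by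
    apply RatFunc.algebraMap_injective ℚ
    rw [map_pow, map_one, ← RatFunc.X]
    exact h
  have := congrArg Polynomial.natDegree this
  simp [Polynomial.natDegree_X_pow] at this
  exact hk this

/-- bases we use -/
structure GoodBase (b : F) : Prop where
  ne_zero : b ≠ 0
  pow_ne_one : ∀ k : ℕ, k ≠ 0 → b ^ k ≠ 1

lemma good_q : GoodBase q := ⟨q_ne_zero, fun k hk => q_pow_ne_one hk⟩

lemma good_q2 : GoodBase (q ^ 2) := by
  refine ⟨pow_ne_zero _ q_ne_zero, fun k hk => ?_⟩
  rw [← pow_mul]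
  exact q_pow_ne_one (by omega)

lemma pq_zero (b : F) : pq b 0 = 1 := by simp [pq]

lemma pq_succ (b : F) (n : ℕ) : pq b (n + 1) = pq b n * (1 - b ^ (n + 1)) := by
  simp [pq, Finset.prod_range_succ]

lemma one_sub_pow_ne_zero {b : F} (hb : GoodBase b) {k : ℕ} (hk : k ≠ 0) :
    1 - b ^ k ≠ 0 := by
  intro h
  exact hb.pow_ne_one k hk (sub_eq_zero.mp h).symm

lemma pq_ne_zero {b : F} (hb : GoodBase b) (n : ℕ) : pq b n ≠ 0 := by
  induction n with
  | zero => simp [pq_zero]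
  | succ m ih =>
      rw [pq_succ]
      exact mul_ne_zero ih (one_sub_pow_ne_zero hb (Nat.succ_ne_zero m))



lemma qbin_of_neg {b : F} {a k : ℤ} (h : k < 0) : qbin b a k = 0 := by
  simp [qbin]; omega

lemma qbin_of_gt {b : F} {a k : ℤ} (h : a < k) : qbin b a k = 0 := by
  simp [qbin]; omega

lemma qbin_eq {b : F} {a k : ℤ} (h0 : 0 ≤ k) (h : k ≤ a) :
    qbin b a k = pq b a.toNat / (pq b k.toNat * pq b (a - k).toNat) := by
  simp [qbin, h0, h]

lemma qbin_zero {b : F} (hb : GoodBase b) {a : ℤ} (ha : 0 ≤ a) : qbin b a 0 = 1 := by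
  rw [qbin_eq le_rfl ha]
  simp [pq_zero, div_self (pq_ne_zero hb _)]

lemma qbin_self {b : F} (hb : GoodBase b) {a : ℤ} (ha : 0 ≤ a) : qbin b a a = 1 := by
  rw [qbin_eq ha le_rfl]
  simp [pq_zero, div_self (pq_ne_zero hb _)]

lemma pascal_core {b : F} (hb : GoodBase b) (K M : ℕ) :
    pq b (K + M + 2) / (pq b (K + 1) * pq b (M + 1)) =
      pq b (K + M + 1) / (pq b (K + 1) * pq b M) +
        b ^ (M + 1) * (pq b (K + M + 1) / (pq b K * pq b (M + 1))) := by
  have e1 : pq b (K + M + 2) = pq b (K + M + 1) * (1 - b ^ (K + M + 2)) := pq_succ b _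
  have e2 : pq b (K + 1) = pq b K * (1 - b ^ (K + 1)) := pq_succ b _
  have e3 : pq b (M + 1) = pq b M * (1 - b ^ (M + 1)) := pq_succ b _
  have hK := pq_ne_zero hb K
  have hM := pq_ne_zero hb M
  have hK1 : (1 : F) - b ^ (K + 1) ≠ 0 := one_sub_pow_ne_zero hb (Nat.succ_ne_zero K)
  have hM1 : (1 : F) - b ^ (M + 1) ≠ 0 := one_sub_pow_ne_zero hb (Nat.succ_ne_zero M)
  rw [e1, e2, e3]
  field_simp
  ring

lemma pascal1 {b : F} (hb : GoodBase b) {a : ℤ} (k : ℤ) (ha : 1 ≤ a) :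
    qbin b a k = qbin b (a - 1) k + b ^ (a - k) * qbin b (a - 1) (k - 1) := by
  rcases lt_trichotomy k 0 with hk | hk | hk
  · rw [qbin_of_neg hk, qbin_of_neg hk, qbin_of_neg (by omega)]; ring
  · subst hk
    rw [qbin_zero hb (by omega), qbin_zero hb (by omega), qbin_of_neg (by omega)]; ring
  · rcases lt_trichotomy k a with hka | hka | hka
    · -- generic case
      set K := (k - 1).toNat with hK
      set M := (a - k - 1).toNat with hM
      have hk' : k = (K : ℤ) + 1 := by omega
      have hak : a - k = (M : ℤ) + 1 := by omega
      have h1 : a.toNat = K + M + 2 := by omega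
      have h2 : k.toNat = K + 1 := by omega
      have h3 : (a - k).toNat = M + 1 := by omega
      have h4 : (a - 1).toNat = K + M + 1 := by omega
      have h5 : (a - 1 - k).toNat = M := by omega
      have h6 : (k - 1).toNat = K := by omega
      have h7 : (a - 1 - (k - 1)).toNat = M + 1 := by omega
      rw [qbin_eq (by omega) (by omega), qbin_eq (by omega) (by omega),
        qbin_eq (by omega) (by omega), h1, h2, h3, h4, h5, h6, h7, hak]
      rw [show ((M : ℤ) + 1) = ((M + 1 : ℕ) : ℤ) by push_cast; ring, zpow_natCast]
      exact pascal_core hb K M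
    · subst hka
      rw [qbin_self hb (by omega), qbin_of_gt (by omega), qbin_self hb (by omega)]
      simp
    · rw [qbin_of_gt hka, qbin_of_gt (by omega), qbin_of_gt (by omega)]; ring

lemma pascal2 {b : F} (hb : GoodBase b) {a : ℤ} (k : ℤ) (ha : 1 ≤ a) :
    qbin b a k = b ^ k * qbin b (a - 1) k + qbin b (a - 1) (k - 1) := by
  rcases lt_trichotomy k 0 with hk | hk | hk
  · rw [qbin_of_neg hk, qbin_of_neg hk, qbin_of_neg (by omega)]; ring
  · subst hk
    rw [qbin_zero hb (by omega), qbin_zero hb (by omega), qbin_of_neg (by omega)]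
    simp
  · rcases lt_trichotomy k a with hka | hka | hka
    · set K := (k - 1).toNat with hK
      set M := (a - k - 1).toNat with hM
      have hk' : k = (K : ℤ) + 1 := by omega
      have h1 : a.toNat = K + M + 2 := by omega
      have h2 : k.toNat = K + 1 := by omega
      have h3 : (a - k).toNat = M + 1 := by omega
      have h4 : (a - 1).toNat = K + M + 1 := by omega
      have h5 : (a - 1 - k).toNat = M := by omega
      have h6 : (k - 1).toNat = K := by omega
      have h7 : (a - 1 - (k - 1)).toNat = M + 1 := by omega
      rw [qbin_eq (by omega) (by omega), qbin_eq (by omega) (by omega),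
        qbin_eq (by omega) (by omega), h1, h2, h3, h4, h5, h6, h7, hk']
      rw [show ((K : ℤ) + 1) = ((K + 1 : ℕ) : ℤ) by push_cast; ring, zpow_natCast]
      -- symmetric version of pascal_core
      have e1 : pq b (K + M + 2) = pq b (K + M + 1) * (1 - b ^ (K + M + 2)) := pq_succ b _
      have e2 : pq b (K + 1) = pq b K * (1 - b ^ (K + 1)) := pq_succ b _
      have e3 : pq b (M + 1) = pq b M * (1 - b ^ (M + 1)) := pq_succ b _
      have hK' := pq_ne_zero hb K
      have hM' := pq_ne_zero hb M
      have hK1 : (1 : F) - b ^ (K + 1) ≠ 0 := one_sub_pow_ne_zero hb (Nat.succ_ne_zero K)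
      have hM1 : (1 : F) - b ^ (M + 1) ≠ 0 := one_sub_pow_ne_zero hb (Nat.succ_ne_zero M)
      rw [e1, e2, e3]
      field_simp
      ring
    · subst hka
      rw [qbin_self hb (by omega), qbin_of_gt (by omega), qbin_self hb (by omega)]
      simp
    · rw [qbin_of_gt hka, qbin_of_gt (by omega), qbin_of_gt (by omega)]; ring

lemma sum_Icc_eq_range (f : ℤ → F) (a : ℤ) (M : ℕ) :
    ∑ r ∈ Finset.Icc a (a + M - 1), f r = ∑ i ∈ Finset.range M, f (a + i) := by
  refine Finset.sum_nbij' (fun r => (r - a).toNat) (fun i => a + i) ?_ ?_ ?_ ?_ ?_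
  · intro r hr; simp only [Finset.mem_Icc] at hr; simp only [Finset.mem_range]; omega
  · intro i hi; simp only [Finset.mem_range] at hi; simp only [Finset.mem_Icc]; omega
  · intro r hr; simp only [Finset.mem_Icc] at hr; omega
  · intro i _; omega
  · intro r hr; simp only [Finset.mem_Icc] at hr
    congr 1; omega

lemma telescope (w : ℤ → F) (a : ℤ) (M : ℕ) :
    (∑ r ∈ Finset.Icc a (a + M - 1), (w r - w (r + 1))) = w a - w (a + M) := by
  rw [sum_Icc_eq_range]
  have h2 : ∑ i ∈ Finset.range M,
      ((fun j : ℕ => w (a + j)) i - (fun j : ℕ => w (a + j)) (i + 1)) = w (a + (0 : ℕ)) - w (a + M) :=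
    Finset.sum_range_sub' (fun j : ℕ => w (a + j)) M
  simp only [Nat.cast_zero, add_zero] at h2
  rw [← h2]
  apply Finset.sum_congr rfl
  intro i _
  rw [add_assoc]
  push_cast
  ring_nf

def cr (r : ℤ) : F := (-1 : F) ^ r * q ^ (2 * r ^ 2 + r)

lemma cr_mul_q (r e : ℤ) : cr r * q ^ e = (-1 : F) ^ r * q ^ (2 * r ^ 2 + r + e) := by
  rw [cr, mul_assoc, ← zpow_add₀ q_ne_zero]

lemma neg_one_zpow_succ (r : ℤ) : (-1 : F) ^ (r + 1) = -((-1 : F) ^ r) := by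
  rw [zpow_add₀ (by norm_num : (-1 : F) ≠ 0), zpow_one]
  ring

lemma cancel (r e1 e2 : ℤ) (h : 2 * r ^ 2 + r + e1 = 2 * (r + 1) ^ 2 + (r + 1) + e2) :
    cr r * q ^ e1 = -(cr (r + 1) * q ^ e2) := by
  rw [cr_mul_q, cr_mul_q, h, neg_one_zpow_succ]
  ring

lemma cr_zero : cr 0 = 1 := by simp [cr]

def rterm (n : ℕ) (r : ℤ) : F :=
  (-1 : F) ^ r * q ^ (2 * r ^ 2 + r) *
    qbin q (2 * (n : ℤ)) ((n : ℤ) - 2 * r + (if Even r then 0 else -1))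

lemma rterm_eq (n : ℕ) (r : ℤ) :
    rterm n r = cr r * qbin q (2 * (n : ℤ)) ((n : ℤ) - 2 * r + (if Even r then 0 else -1)) := rfl

def tterm (n : ℕ) (r : ℤ) : F := cr r * qbin q (2 * (n : ℤ) - 1) ((n : ℤ) - 2 * r - 1)

def w1 (n : ℕ) (r : ℤ) : F :=
  if Even r then cr r * q ^ ((n : ℤ) - 2 * r) * qbin q (2 * (n : ℤ) - 1) ((n : ℤ) - 2 * r) else 0

lemma termA (n : ℕ) (hn : 1 ≤ n) (r : ℤ) :
    rterm n r = tterm n r + (w1 n r - w1 n (r + 1)) := by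
  rw [rterm_eq, tterm]
  rcases Int.even_or_odd r with he | ho
  · have ho1 : ¬Even (r + 1) := by simp [Int.even_add_one, he]
    rw [if_pos he, add_zero, w1, if_pos he, w1, if_neg ho1]
    rw [pascal2 good_q ((n : ℤ) - 2 * r) (by omega)]
    ring
  · have he' : ¬Even r := Int.not_even_iff_odd.mpr ho
    have he1 : Even (r + 1) := Int.even_add_one.mpr he'
    rw [if_neg he', w1, if_neg he', w1, if_pos he1]
    rw [pascal1 good_q ((n : ℤ) - 2 * r + -1) (by omega)]
    rw [show 2 * (n : ℤ) - ((n : ℤ) - 2 * r + -1) = (n : ℤ) + 2 * r + 1 by ring]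
    rw [show (n : ℤ) - 2 * r + -1 - 1 = (n : ℤ) - 2 * (r + 1) by ring]
    rw [show (n : ℤ) - 2 * r + -1 = (n : ℤ) - 2 * r - 1 by ring]
    have hc := cancel r ((n : ℤ) + 2 * r + 1) ((n : ℤ) - 2 * (r + 1)) (by ring)
    calc cr r * (qbin q (2 * (n : ℤ) - 1) ((n : ℤ) - 2 * r - 1) +
            q ^ ((n : ℤ) + 2 * r + 1) * qbin q (2 * (n : ℤ) - 1) ((n : ℤ) - 2 * (r + 1)))
        = cr r * qbin q (2 * (n : ℤ) - 1) ((n : ℤ) - 2 * r - 1) +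
            (cr r * q ^ ((n : ℤ) + 2 * r + 1)) * qbin q (2 * (n : ℤ) - 1) ((n : ℤ) - 2 * (r + 1)) := by
          ring
      _ = _ := by rw [hc]; ring

lemma pascalE12 (a j : ℤ) (ha : 2 ≤ a) :
    qbin q a j = q ^ j * qbin q (a - 2) j + (1 + q ^ (a - 1)) * qbin q (a - 2) (j - 1)
      + q ^ (a - j) * qbin q (a - 2) (j - 2) := by
  rw [pascal1 good_q j (by omega)]
  rw [pascal2 good_q j (a := a - 1) (by omega)]
  rw [pascal2 good_q (j - 1) (a := a - 1) (by omega)]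
  rw [show a - 1 - 1 = a - 2 by ring, show j - 1 - 1 = j - 2 by ring]
  have : q ^ (a - j) * q ^ (j - 1) = q ^ (a - 1) := by
    rw [← zpow_add₀ q_ne_zero]
    congr 1
    ring
  calc q ^ j * qbin q (a - 2) j + qbin q (a - 2) (j - 1) +
        q ^ (a - j) * (q ^ (j - 1) * qbin q (a - 2) (j - 1) + qbin q (a - 2) (j - 2))
      = q ^ j * qbin q (a - 2) j + (1 + q ^ (a - j) * q ^ (j - 1)) * qbin q (a - 2) (j - 1)
        + q ^ (a - j) * qbin q (a - 2) (j - 2) := by ring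
    _ = _ := by rw [this]

def w2 (n : ℕ) (r : ℤ) : F :=
  cr r * q ^ ((n : ℤ) - 2 * r - 1) * qbin q (2 * (n : ℤ) - 3) ((n : ℤ) - 2 * r - 1)

lemma termB (n : ℕ) (hn : 2 ≤ n) (r : ℤ) :
    tterm n r = (1 + q ^ (2 * (n : ℤ) - 2)) * tterm (n - 1) r + (w2 n r - w2 n (r + 1)) := by
  rw [tterm, tterm, w2, w2]
  rw [pascalE12 (2 * (n : ℤ)- 1) ((n : ℤ) - 2 * r - 1) (by omega)]
  rw [show 2 * (n : ℤ) - 1 - 2 = 2 * (n : ℤ) - 3 by ring,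
    show 2 * (n : ℤ) - 1 - 1 = 2 * (n : ℤ) - 2 by ring,
    show 2 * (n : ℤ) - 1 - ((n : ℤ) - 2 * r - 1) = (n : ℤ) + 2 * r by ring,
    show ((n - 1 : ℕ) : ℤ) = (n : ℤ) - 1 by omega,
    show 2 * ((n : ℤ) - 1) - 1 = 2 * (n : ℤ) - 3 by ring,
    show (n : ℤ) - 2 * r - 1 - 1 = (n : ℤ) - 1 - 2 * r - 1 by ring,
    show (n : ℤ) - 2 * r - 1 - 2 = (n : ℤ) - 2 * (r + 1) - 1 by ring]
  have hc := cancel r ((n : ℤ) + 2 * r) ((n : ℤ) - 2 * (r + 1) - 1) (by ring)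
  calc cr r * (q ^ ((n : ℤ) - 2 * r - 1) * qbin q (2 * (n : ℤ) - 3) ((n : ℤ) - 2 * r - 1)
        + (1 + q ^ (2 * (n : ℤ) - 2)) * qbin q (2 * (n : ℤ) - 3) ((n : ℤ) - 1 - 2 * r - 1)
        + q ^ ((n : ℤ) + 2 * r) * qbin q (2 * (n : ℤ) - 3) ((n : ℤ) - 2 * (r + 1) - 1))
      = (1 + q ^ (2 * (n : ℤ) - 2)) * (cr r * qbin q (2 * (n : ℤ) - 3) ((n : ℤ) - 1 - 2 * r - 1))
        + (cr r * q ^ ((n : ℤ) - 2 * r - 1) * qbin q (2 * (n : ℤ) - 3) ((n : ℤ) - 2 * r - 1)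
          - (-(cr r * q ^ ((n : ℤ) + 2 * r))) * qbin q (2 * (n : ℤ) - 3) ((n : ℤ) - 2 * (r + 1) - 1)) := by
        ring
    _ = _ := by rw [hc]; ring

lemma tterm_eq_zero {n : ℕ} {r : ℤ} (h : r < -(n : ℤ) - 2 ∨ (n : ℤ) + 2 < r) : tterm n r = 0 := by
  rw [tterm]
  rcases h with h | h
  · rw [qbin_of_gt (by omega)]; ring
  · rw [qbin_of_neg (by omega)]; ring

lemma rterm_eq_zero {n : ℕ} {r : ℤ} (h : r < -(n : ℤ) - 2 ∨ (n : ℤ) + 2 < r) : rterm n r = 0 := by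
  rw [rterm]
  have hif : (-1 : ℤ) ≤ (if Even r then (0 : ℤ) else -1) ∧ (if Even r then (0 : ℤ) else -1) ≤ 0 := by
    split <;> norm_num
  rcases h with h | h
  · rw [qbin_of_gt (by omega)]; ring
  · rw [qbin_of_neg (by omega)]; ring

def Tsum (n : ℕ) : F := ∑ᶠ r : ℤ, tterm n r

lemma Tsum_eq_Icc (n : ℕ) (N : ℤ) (hN : (n : ℤ) + 2 ≤ N) :
    Tsum n = ∑ r ∈ Finset.Icc (-N) N, tterm n r := by
  apply finsum_eq_sum_of_support_subset
  intro r hr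
  simp only [Function.mem_support] at hr
  simp only [Finset.coe_Icc, Set.mem_Icc]
  by_contra hmem
  exact hr (tterm_eq_zero (by omega))

lemma Tsum_one : Tsum 1 = 1 := by
  rw [Tsum, finsum_eq_single _ 0]
  · rw [tterm, cr_zero]
    norm_num
    rw [qbin_zero good_q (by norm_num)]
  · intro r hr
    rw [tterm]
    rcases lt_or_gt_of_ne hr with h | h
    · rw [qbin_of_gt (by push_cast; omega)]; ring
    · rw [qbin_of_neg (by push_cast; omega)]; ring

lemma Tsum_rec (n : ℕ) (hn : 2 ≤ n) : Tsum n = (1 + q ^ (2 * (n : ℤ) - 2)) * Tsum (n - 1) := by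
  set N : ℤ := (n : ℤ) + 2 with hN
  rw [Tsum_eq_Icc n N (by omega), Tsum_eq_Icc (n - 1) N (by push_cast; omega)]
  rw [Finset.sum_congr rfl (fun r _ => termB n hn r), Finset.sum_add_distrib, ← Finset.mul_sum]
  have htel : (∑ r ∈ Finset.Icc (-N) N, (w2 n r - w2 n (r + 1))) = w2 n (-N) - w2 n (N + 1) := by
    have := telescope (w2 n) (-N) (2 * n + 5)
    rw [show -N + (2 * n + 5 : ℕ) - 1 = N by push_cast; omega, show -N + ((2 * n + 5 : ℕ) : ℤ) = N + 1 by push_cast; omega] at this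
    exact this
  rw [htel]
  have h1 : w2 n (-N) = 0 := by
    rw [w2, qbin_of_gt (by omega)]; ring
  have h2 : w2 n (N + 1) = 0 := by
    rw [w2, qbin_of_neg (by omega)]; ring
  rw [h1, h2]
  ring

lemma Rsum_eq_Tsum (n : ℕ) (hn : 1 ≤ n) : (∑ᶠ r : ℤ, rterm n r) = Tsum n := by
  set N : ℤ := (n : ℤ) + 2 with hN
  have hR : (∑ᶠ r : ℤ, rterm n r) = ∑ r ∈ Finset.Icc (-N) N, rterm n r := by
    apply finsum_eq_sum_of_support_subset
    intro r hr
    simp only [Function.mem_support] at hr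
    simp only [Finset.coe_Icc, Set.mem_Icc]
    by_contra hmem
    exact hr (rterm_eq_zero (by omega))
  rw [hR, Tsum_eq_Icc n N (by omega)]
  rw [Finset.sum_congr rfl (fun r _ => termA n hn r), Finset.sum_add_distrib]
  have htel : (∑ r ∈ Finset.Icc (-N) N, (w1 n r - w1 n (r + 1))) = w1 n (-N) - w1 n (N + 1) := by
    have := telescope (w1 n) (-N) (2 * n + 5)
    rw [show -N + (2 * n + 5 : ℕ) - 1 = N by push_cast; omega, show -N + ((2 * n + 5 : ℕ) : ℤ) = N + 1 by push_cast; omega] at this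
    exact this
  have h1 : w1 n (-N) = 0 := by
    rw [w1]
    split
    · rw [qbin_of_gt (by omega)]; ring
    · rfl
  have h2 : w1 n (N + 1) = 0 := by
    rw [w1]
    split
    · rw [qbin_of_neg (by omega)]; ring
    · rfl
  rw [htel, h1, h2]
  ring

def P (n : ℕ) : F := ∏ j ∈ Finset.range (n - 1), (1 + q ^ (2 * j + 2))

def Lfin (n : ℕ) : F := ∑ i ∈ Finset.range (n + 1), q ^ (i ^ 2 + i) * qbin (q ^ 2) ((n : ℤ) - 1) (i : ℤ)

lemma Lfin_one : Lfin 1 = 1 := by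
  rw [Lfin]
  rw [Finset.sum_range_succ, Finset.sum_range_one]
  norm_num
  rw [qbin_zero good_q2 (by norm_num), qbin_of_gt (by norm_num)]
  simp

lemma Lfin_rec (m : ℕ) : Lfin (m + 2) = (1 + q ^ (2 * m + 2)) * Lfin (m + 1) := by
  have key : ∀ i ∈ Finset.range (m + 3),
      q ^ (i ^ 2 + i) * qbin (q ^ 2) ((m + 2 : ℕ) - 1 : ℤ) (i : ℤ) =
        q ^ (i ^ 2 + i) * qbin (q ^ 2) ((m + 1 : ℕ) - 1 : ℤ) (i : ℤ)
          + q ^ (i ^ 2 + i) * ((q ^ 2) ^ (((m : ℤ) + 1) - i) * qbin (q ^ 2) ((m + 1 : ℕ) - 1 : ℤ) ((i : ℤ) - 1)) := by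
    intro i _
    have h := pascal1 good_q2 (b := q ^ 2) (a := ((m : ℤ) + 1)) (i : ℤ) (by omega)
    rw [show ((m : ℤ) + 1 - 1) = (m : ℤ) by ring] at h
    push_cast
    rw [show ((m : ℤ) + 2 - 1) = (m : ℤ) + 1 by ring, show ((m : ℤ) + 1 - 1) = (m : ℤ) by ring, h]
    ring
  rw [Lfin, show m + 2 + 1 = m + 3 from rfl, Finset.sum_congr rfl key, Finset.sum_add_distrib]
  have e1 : ∑ i ∈ Finset.range (m + 3), q ^ (i ^ 2 + i) * qbin (q ^ 2) ((m + 1 : ℕ) - 1 : ℤ) (i : ℤ)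
      = Lfin (m + 1) := by
    rw [Lfin, show m + 1 + 1 = m + 2 from rfl, Finset.sum_range_succ]
    rw [qbin_of_gt (by push_cast; omega)]
    ring
  have e2 : ∑ i ∈ Finset.range (m + 3),
      q ^ (i ^ 2 + i) * ((q ^ 2) ^ (((m : ℤ) + 1) - i) * qbin (q ^ 2) ((m + 1 : ℕ) - 1 : ℤ) ((i : ℤ) - 1))
      = q ^ (2 * m + 2) * Lfin (m + 1) := by
    rw [show m + 3 = (m + 2) + 1 from rfl, Finset.sum_range_succ']
    simp only [Nat.cast_zero, Nat.cast_add, Nat.cast_one]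
    rw [qbin_of_neg (show (0 : ℤ) - 1 < 0 by norm_num)]
    rw [show (q ^ (0 ^ 2 + 0) * ((q ^ 2) ^ (((m : ℤ)) + 1 - 0) * (0:F))) = 0 by ring, add_zero,
      Lfin, Finset.mul_sum]
    apply Finset.sum_congr rfl
    intro j hj
    simp only [Finset.mem_range] at hj
    rcases Nat.lt_or_ge j (m + 1) with hjm | hjm
    · have hcast : ((j : ℤ) + 1 - 1) = (j : ℤ) := by ring
      push_cast
      rw [hcast, show (m : ℤ) + 1 - ((j : ℤ) + 1) = ((m - j : ℕ) : ℤ) by push_cast; omega,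
        zpow_natCast, show (m : ℤ) + 1 - 1 = (m : ℤ) by ring]
      rw [← mul_assoc, ← pow_mul, ← pow_add, ← mul_assoc, ← pow_add]
      congr 2
      have h2 : (j + 1) ^ 2 = j ^ 2 + 2 * j + 1 := by ring
      omega
    · have h1 : j = m + 1 := by omega
      subst h1
      rw [qbin_of_gt (by push_cast; omega), qbin_of_gt (by push_cast; omega)]
      ring
  rw [e1, e2]
  ring

lemma Lfin_eq_P (m : ℕ) : Lfin (m + 1) = P (m + 1) := by
  induction m with
  | zero => rw [Lfin_one]; simp [P]
  | succ k ih =>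
      rw [Lfin_rec, ih, P, P]
      rw [show k + 2 - 1 = (k + 1 - 1) + 1 from rfl, Finset.prod_range_succ]
      simp only [Nat.add_sub_cancel]
      ring

lemma lhs_eval (n : ℕ) :
    (∑ᶠ n1 : ℕ, q ^ (n1 ^ 2 + n1) * qbin' (q ^ 2) ((n : ℤ) - 1) (n1 : ℤ)) = P n := by
  rcases Nat.eq_zero_or_pos n with hn | hn
  · subst hn
    rw [finsum_eq_single _ 0]
    · simp [qbin', P]
    · intro x hx
      rw [qbin', if_neg (by simp; omega), qbin_of_gt (by push_cast; omega)]
      ring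
  · have hq' : ∀ n1 : ℕ, qbin' (q ^ 2) ((n : ℤ) - 1) (n1 : ℤ) = qbin (q ^ 2) ((n : ℤ) - 1) (n1 : ℤ) := by
      intro n1
      rw [qbin', if_neg (by push_cast; omega)]
    simp only [hq']
    rw [finsum_eq_sum_of_support_subset _ (s := Finset.range (n + 1)) ?sub]
    case sub =>
      intro x hx
      simp only [Function.mem_support] at hx
      by_contra hmem
      simp only [Finset.coe_range, Set.mem_Iio, not_lt] at hmem
      apply hx
      rw [qbin_of_gt (by push_cast; omega)]
      ring
    rw [← Lfin]
    obtain ⟨m, rfl⟩ : ∃ m, n = m + 1 := ⟨n - 1, by omega⟩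
    exact Lfin_eq_P m

lemma Tsum_eq_P (n : ℕ) (hn : 1 ≤ n) : Tsum n = P n := by
  induction n with
  | zero => omega
  | succ m ih =>
      rcases Nat.eq_zero_or_pos m with hm | hm
      · subst hm
        rw [Tsum_one]
        simp [P]
      · have h2 : 2 ≤ m + 1 := by omega
        rw [Tsum_rec (m + 1) h2]
        simp only [Nat.add_sub_cancel]
        rw [ih hm, P, P]
        obtain ⟨k, rfl⟩ : ∃ k, m = k + 1 := ⟨m - 1, by omega⟩
        simp only [Nat.add_sub_cancel]
        rw [Finset.prod_range_succ]
        have hq : q ^ (2 * ((k + 1 + 1 : ℕ) : ℤ) - 2) = q ^ (2 * k + 2) := by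
          rw [show 2 * ((k + 1 + 1 : ℕ) : ℤ) - 2 = ((2 * k + 2 : ℕ) : ℤ) by push_cast; ring,
            zpow_natCast]
        rw [hq]
        ring

lemma rhs_eval (n : ℕ) : (∑ᶠ r : ℤ, rterm n r) = P n := by
  rcases Nat.eq_zero_or_pos n with hn | hn
  · subst hn
    rw [finsum_eq_single _ 0]
    · rw [rterm]
      norm_num
      rw [qbin_zero good_q le_rfl]
      simp [P]
    · intro r hr
      rw [rterm]
      have hif : (-1 : ℤ) ≤ (if Even r then (0 : ℤ) else -1) ∧ (if Even r then (0 : ℤ) else -1) ≤ 0 := by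
        split <;> norm_num
      rcases lt_or_gt_of_ne hr with h | h
      · rw [qbin_of_gt (by push_cast; omega)]; ring
      · rw [qbin_of_neg (by push_cast; omega)]; ring
  · rw [Rsum_eq_Tsum n hn, Tsum_eq_P n hn]

theorem stmt5 (n : ℕ) :
    (∑ᶠ n1 : ℕ, q ^ (n1 ^ 2 + n1) * qbin' (q ^ 2) ((n : ℤ) - 1) (n1 : ℤ)) =
      ∑ᶠ r : ℤ, (-1 : F) ^ r * q ^ (2 * r ^ 2 + r) *
        qbin q (2 * (n : ℤ)) ((n : ℤ) - 2 * r + (if Even r then 0 else -1)) := by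
  rw [lhs_eval n]
  exact (rhs_eval n).symm

end
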